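/- Let n ≥ 1 be an integer. There exists a constant C > 0 such that for every f ∈ L^1(ℝ^n) and every λ > 0, vol{ x ∈ ℝ^n : M^{exp,∇}f(x) > λ } ≤ C ‖f‖_{L^1} / λ. That is, the vertical heat maximal operator M^{exp,∇} is of weak type (1,1) on ℝ^n. -/

import Mathlib

open MeasureTheory Metric
open scoped ENNReal NNReal

/-- The Gaussian heat kernel `K_t(x) = (4πt)^{-n/2} exp(-‖x‖²/(4t))` on `ℝ^n`. -/
noncomputable def heatKernel (n : ℕ) (t : ℝ) (x : EuclideanSpace ℝ (Fin n)) : ℝ :=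
  (4 * Real.pi * t) ^ (-(n : ℝ) / 2) * Real.exp (-‖x‖ ^ 2 / (4 * t))

/-- The gradient of the Gaussian heat kernel, `∇K_t(x) = -(x/(2t)) K_t(x)`. -/
noncomputable def gradHeatKernel (n : ℕ) (t : ℝ) (x : EuclideanSpace ℝ (Fin n)) :
    EuclideanSpace ℝ (Fin n) :=
  (-(1 / (2 * t)) * heatKernel n t x) • x

/-- The vertical heat maximal function
`M^{exp,∇} f (x) = sup_{t>0} √t ‖∫ ∇K_t(x-y) f(y) dy‖` (valued in `ℝ≥0∞`). -/
noncomputable def vertHeatMax (n : ℕ) (f : EuclideanSpace ℝ (Fin n) → ℝ)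
    (x : EuclideanSpace ℝ (Fin n)) : ℝ≥0∞ :=
  ⨆ (t : ℝ) (_ : 0 < t),
    ENNReal.ofReal (Real.sqrt t * ‖∫ y, f y • gradHeatKernel n t (x - y)‖)

lemma pow_mul_exp_bound (m : ℕ) {a u : ℝ} (hu : 0 < u) (hua : u ≤ a) :
    a ^ m * Real.exp (-(a ^ 2) / (4 * u ^ 2)) ≤ (m.factorial : ℝ) * 4 ^ m * u ^ m := by
  have ha : 0 < a := hu.trans_le hua
  have hx : (0:ℝ) ≤ a ^ 2 / (4 * u ^ 2) := by positivity
  have h1 := Real.pow_div_factorial_le_exp (a ^ 2 / (4 * u ^ 2)) hx m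
  have hexp : Real.exp (-(a ^ 2) / (4 * u ^ 2)) = (Real.exp (a ^ 2 / (4 * u ^ 2)))⁻¹ := by
    rw [← Real.exp_neg]; ring_nf
  rw [hexp, mul_inv_le_iff₀ (Real.exp_pos _)]
  calc a ^ m ≤ a ^ m * (a / u) ^ m := by
        nlinarith [pow_pos ha m, one_le_pow₀ ((one_le_div hu).2 hua) (n := m)]
    _ = (m.factorial : ℝ) * 4 ^ m * u ^ m * ((a ^ 2 / (4 * u ^ 2)) ^ m / m.factorial) := by
        have hu0 := hu.ne'
        have hf : (m.factorial : ℝ) ≠ 0 := by positivity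
        rw [div_pow, div_pow, mul_pow, ← pow_mul, ← pow_mul]
        field_simp
        ring
    _ ≤ (m.factorial : ℝ) * 4 ^ m * u ^ m * Real.exp (a ^ 2 / (4 * u ^ 2)) := by
        have h2 : (0:ℝ) ≤ (m.factorial : ℝ) * 4 ^ m * u ^ m := by positivity
        exact mul_le_mul_of_nonneg_left h1 h2

lemma rpow_factor_le (n : ℕ) {t : ℝ} (ht : 0 < t) :
    (4 * Real.pi * t) ^ (-(n : ℝ) / 2) ≤ ((Real.sqrt t) ^ n)⁻¹ := by
  have hb : (0:ℝ) < 4 * Real.pi * t := by positivity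
  have h1 : (4 * Real.pi * t) ^ (-(n : ℝ) / 2)
      = ((Real.sqrt (4 * Real.pi * t)) ^ n)⁻¹ := by
    rw [neg_div, Real.rpow_neg hb.le, Real.sqrt_eq_rpow, ← Real.rpow_natCast
      ((4 * Real.pi * t) ^ (1/2 : ℝ)) n, ← Real.rpow_mul hb.le]
    congr 1
    ring
    try ring_nf
  rw [h1]
  have h2 : Real.sqrt t ≤ Real.sqrt (4 * Real.pi * t) := by
    apply Real.sqrt_le_sqrt
    nlinarith [Real.pi_gt_three]
  have h3 : (Real.sqrt t) ^ n ≤ (Real.sqrt (4 * Real.pi * t)) ^ n :=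
    pow_le_pow_left₀ (Real.sqrt_nonneg t) h2 n
  exact inv_anti₀ (pow_pos (Real.sqrt_pos.2 ht) n) h3

lemma heatKernel_pos (n : ℕ) {t : ℝ} (ht : 0 < t) (x : EuclideanSpace ℝ (Fin n)) :
    0 < heatKernel n t x := by unfold heatKernel; positivity

noncomputable def Dconst (n : ℕ) : ℝ := ((n+2).factorial : ℝ) * 4 ^ (n+2) * 2 ^ (n+1)

lemma one_le_Dconst (n : ℕ) : (1:ℝ) ≤ Dconst n := by
  unfold Dconst
  have h1 : (1:ℝ) ≤ ((n+2).factorial : ℝ) := by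
    exact_mod_cast Nat.one_le_iff_ne_zero.2 (Nat.factorial_ne_zero _)
  have h2 : (1:ℝ) ≤ 4 ^ (n+2) := one_le_pow₀ (by norm_num)
  have h3 : (1:ℝ) ≤ 2 ^ (n+1) := one_le_pow₀ (by norm_num)
  calc (1:ℝ) ≤ ((n+2).factorial : ℝ) * 4 ^ (n+2) := by nlinarith
    _ ≤ _ := le_mul_of_one_le_right (by positivity) h3

lemma kernel_dyadic_bound (n : ℕ) {t : ℝ} (ht : 0 < t) (z : EuclideanSpace ℝ (Fin n)) (k : ℕ)
    (hk : ‖z‖ ≤ 2 ^ k * Real.sqrt t)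
    (hk' : k = 0 ∨ 2 ^ (k-1) * Real.sqrt t < ‖z‖) :
    Real.sqrt t * ‖gradHeatKernel n t z‖
      ≤ Dconst n / (2 ^ k * (2 ^ k * Real.sqrt t) ^ n) := by
  set u := Real.sqrt t with hu_def
  have hu : 0 < u := Real.sqrt_pos.2 ht
  have htu : t = u ^ 2 := (Real.sq_sqrt ht.le).symm
  have ha0 : (0:ℝ) ≤ ‖z‖ := norm_nonneg z
  set a := ‖z‖ with ha_def
  set X := Real.exp (-(a ^ 2) / (4 * u ^ 2)) with hX_def
  have hX0 : 0 < X := Real.exp_pos _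
  have hX1 : X ≤ 1 := Real.exp_le_one_iff.2 (by
    apply div_nonpos_of_nonpos_of_nonneg
    · simpa using sq_nonneg a
    · positivity)
  have hD : (1:ℝ) ≤ Dconst n := one_le_Dconst n
  -- norm of the gradient
  have hG : ‖gradHeatKernel n t z‖ = 1 / (2 * t) * heatKernel n t z * a := by
    unfold gradHeatKernel
    rw [norm_smul, Real.norm_eq_abs, abs_mul, abs_neg,
      abs_of_pos (by positivity : (0:ℝ) < 1 / (2 * t)),
      abs_of_pos (heatKernel_pos n ht z)]
  -- bound the heat kernel
  have hK : heatKernel n t z ≤ (u ^ n)⁻¹ * X := by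
    unfold heatKernel
    have e : (4:ℝ) * t = 4 * u ^ 2 := by rw [htu]
    rw [e]
    exact mul_le_mul_of_nonneg_right (rpow_factor_le n ht) (Real.exp_pos _).le
  have step1 : u * ‖gradHeatKernel n t z‖ ≤ a * X / (2 * u ^ (n+1)) := by
    rw [hG]
    have : u * (1 / (2 * t) * ((u ^ n)⁻¹ * X) * a) = a * X / (2 * u ^ (n+1)) := by
      rw [htu]; field_simp; ring
    calc u * (1 / (2 * t) * heatKernel n t z * a)
        ≤ u * (1 / (2 * t) * ((u ^ n)⁻¹ * X) * a) := by
          gcongr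
      _ = a * X / (2 * u ^ (n+1)) := this
  refine step1.trans ?_
  rw [div_le_div_iff₀ (by positivity) (by positivity)]
  -- goal : a * X * (2^k * (2^k*u)^n) ≤ Dconst n * (2 * u^(n+1))
  rcases hk' with rfl | hlow
  · -- k = 0 case
    simp only [pow_zero, one_mul] at hk ⊢
    have h1 : a * X ≤ u := by nlinarith
    have h2 : a * X * u ^ n ≤ u * u ^ n := by
      exact mul_le_mul_of_nonneg_right h1 (by positivity)
    have h3 : u * u ^ n ≤ Dconst n * (2 * u ^ (n+1)) := by
      have : u * u ^ n = u ^ (n+1) := by ring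
      rw [this]
      nlinarith [pow_pos hu (n+1)]
    linarith
  · -- k ≥ 1 case
    have hk1 : 1 ≤ k := by
      by_contra h
      interval_cases k
      · simp at hlow; nlinarith
    have hua : u ≤ a := by
      have : (1:ℝ) ≤ 2 ^ (k-1) := one_le_pow₀ (by norm_num)
      nlinarith
    have h2a : (2:ℝ) ^ k * u ≤ 2 * a := by
      have e2 : (2:ℝ) ^ k = 2 * 2 ^ (k-1) := by
        rw [← pow_succ']
        congr 1
        omega
      rw [e2]
      nlinarith
    have hM := pow_mul_exp_bound (n+2) hu hua
    set M := ((n+2).factorial : ℝ) * 4 ^ (n+2) with hM_def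
    -- multiply the goal by u
    have key : a * X * (2 ^ k * (2 ^ k * u) ^ n) * u ≤ Dconst n * (2 * u ^ (n+1)) * u := by
      have e1 : a * X * (2 ^ k * (2 ^ k * u) ^ n) * u = a * X * (2 ^ k * u) ^ (n+1) := by
        rw [pow_succ]; ring
      rw [e1]
      have h3 : (2 ^ k * u) ^ (n+1) ≤ (2 * a) ^ (n+1) :=
        pow_le_pow_left₀ (by positivity) h2a (n+1)
      calc a * X * (2 ^ k * u) ^ (n+1) ≤ a * X * (2 * a) ^ (n+1) := by
            have := mul_pos (hu.trans_le hua) hX0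
            exact mul_le_mul_of_nonneg_left h3 (by positivity)
        _ = 2 ^ (n+1) * (a ^ (n+2) * X) := by ring
        _ ≤ 2 ^ (n+1) * (M * u ^ (n+2)) := by
            exact mul_le_mul_of_nonneg_left hM (by positivity)
        _ ≤ Dconst n * (2 * u ^ (n+1)) * u := by
            have eD : Dconst n = M * 2 ^ (n+1) := by rw [hM_def]; unfold Dconst; ring
            rw [eD]
            have hMpos : 0 < M := by
              rw [hM_def]; positivity
            have e2 : M * 2 ^ (n+1) * (2 * u ^ (n+1)) * u = 2 * (2 ^ (n+1) * (M * u ^ (n+2))) := by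
              rw [pow_succ u (n+1)]; ring
            have pos2 : 0 < 2 ^ (n+1) * (M * u ^ (n+2)) := by positivity
            linarith
    exact le_of_mul_le_mul_right key hu

lemma vol_closedBall (n : ℕ) (x : EuclideanSpace ℝ (Fin n)) {r : ℝ} (hr : 0 ≤ r) :
    volume (closedBall x r)
      = ENNReal.ofReal (r ^ n) * volume (ball (0 : EuclideanSpace ℝ (Fin n)) 1) := by
  rw [Measure.addHaar_closedBall volume x hr, finrank_euclideanSpace_fin]

lemma point_estimate (n : ℕ) (hn : 1 ≤ n) {f : EuclideanSpace ℝ (Fin n) → ℝ}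
    (hf : Integrable f volume) {t lam : ℝ} (ht : 0 < t)
    (x : EuclideanSpace ℝ (Fin n))
    (hx : ENNReal.ofReal lam
      < ENNReal.ofReal (Real.sqrt t * ‖∫ y, f y • gradHeatKernel n t (x - y)‖)) :
    ∃ r : ℝ, 0 < r ∧
      ENNReal.ofReal lam
          * (volume (ball (0 : EuclideanSpace ℝ (Fin n)) 1)
              * ENNReal.ofReal (2 * Dconst n))⁻¹
          * volume (closedBall x r)
        < ∫⁻ y in closedBall x r, ‖f y‖₊ ∂volume := by
  haveI : NeZero n := ⟨by omega⟩
  set u := Real.sqrt t with hu_def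
  have hu : 0 < u := Real.sqrt_pos.2 ht
  set vB := volume (ball (0 : EuclideanSpace ℝ (Fin n)) 1) with hvB_def
  have hvB0 : vB ≠ 0 := (measure_ball_pos _ _ one_pos).ne'
  have hvBt : vB ≠ ⊤ := measure_ball_lt_top.ne
  have hD1 : (1:ℝ) ≤ Dconst n := one_le_Dconst n
  set w := vB * ENNReal.ofReal (2 * Dconst n) with hw_def
  have hw0 : w ≠ 0 := by
    simp only [hw_def, mul_ne_zero_iff]
    exact ⟨hvB0, (ENNReal.ofReal_pos.2 (by linarith)).ne'⟩
  have hwt : w ≠ ⊤ := ENNReal.mul_ne_top hvBt ENNReal.ofReal_ne_top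
  by_contra hcon
  push_neg at hcon
  -- the dyadic pieces
  set c : ℕ → ℝ := fun k => Dconst n / (2 ^ k * (2 ^ k * u) ^ n) with hc_def
  set F : ℕ → EuclideanSpace ℝ (Fin n) → ℝ≥0∞ := fun k =>
    (closedBall x (2 ^ k * u)).indicator (fun _ => ENNReal.ofReal (c k)) with hF_def
  -- Step A
  have stepA : ENNReal.ofReal (u * ‖∫ y, f y • gradHeatKernel n t (x - y)‖)
      ≤ ∫⁻ y, (‖f y‖₊ : ℝ≥0∞) * ENNReal.ofReal (u * ‖gradHeatKernel n t (x - y)‖) := by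
    rw [ENNReal.ofReal_mul (Real.sqrt_nonneg t), ofReal_norm]
    calc ENNReal.ofReal u * (‖∫ y, f y • gradHeatKernel n t (x - y)‖₊ : ℝ≥0∞)
        ≤ ENNReal.ofReal u * ∫⁻ y, (‖f y • gradHeatKernel n t (x - y)‖₊ : ℝ≥0∞) := by
          gcongr
          exact enorm_integral_le_lintegral_enorm _
      _ = ∫⁻ y, ENNReal.ofReal u * (‖f y • gradHeatKernel n t (x - y)‖₊ : ℝ≥0∞) :=
          (lintegral_const_mul' _ _ ENNReal.ofReal_ne_top).symm
      _ = ∫⁻ y, (‖f y‖₊ : ℝ≥0∞) * ENNReal.ofReal (u * ‖gradHeatKernel n t (x - y)‖) := by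
          refine lintegral_congr fun y => ?_
          rw [nnnorm_smul, ENNReal.coe_mul, ENNReal.ofReal_mul hu.le,
            ofReal_norm, enorm_eq_nnnorm]
          ring
  -- Step B
  have stepB : ∀ y, ENNReal.ofReal (u * ‖gradHeatKernel n t (x - y)‖) ≤ ∑' k, F k y := by
    intro y
    have hex : ∃ k : ℕ, ‖x - y‖ ≤ 2 ^ k * u := by
      obtain ⟨k, hk⟩ := pow_unbounded_of_one_lt (‖x - y‖ / u) one_lt_two
      exact ⟨k, by rw [div_lt_iff₀ hu] at hk; linarith⟩
    set k₀ := Nat.find hex with hk₀_def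
    have hk₀ : ‖x - y‖ ≤ 2 ^ k₀ * u := Nat.find_spec hex
    have hmin : k₀ = 0 ∨ 2 ^ (k₀ - 1) * u < ‖x - y‖ := by
      rcases Nat.eq_zero_or_pos k₀ with h | h
      · exact Or.inl h
      · right
        have := Nat.find_min hex (show k₀ - 1 < k₀ by omega)
        push_neg at this
        exact this
    have hb := kernel_dyadic_bound n ht (x - y) k₀ hk₀ hmin
    have hyB : y ∈ closedBall x (2 ^ k₀ * u) := by
      rw [mem_closedBall, dist_eq_norm, ← norm_sub_rev]
      exact hk₀
    calc ENNReal.ofReal (u * ‖gradHeatKernel n t (x - y)‖)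
        ≤ ENNReal.ofReal (c k₀) := ENNReal.ofReal_le_ofReal hb
      _ = F k₀ y := by rw [hF_def]; simp [Set.indicator_of_mem hyB]
      _ ≤ ∑' k, F k y := ENNReal.le_tsum k₀
  -- Step C
  have stepC : ∫⁻ y, (‖f y‖₊ : ℝ≥0∞) * ∑' k, F k y
      = ∑' k, ENNReal.ofReal (c k) * ∫⁻ y in closedBall x (2 ^ k * u), (‖f y‖₊ : ℝ≥0∞) := by
    have e1 : ∀ y, (‖f y‖₊ : ℝ≥0∞) * ∑' k, F k y = ∑' k, (‖f y‖₊ : ℝ≥0∞) * F k y :=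
      fun y => ENNReal.tsum_mul_left.symm
    rw [lintegral_congr e1, lintegral_tsum (fun k => ?_)]
    · congr 1
      funext k
      have e2 : (fun y => (‖f y‖₊ : ℝ≥0∞) * F k y)
          = (closedBall x (2 ^ k * u)).indicator
              (fun y => ENNReal.ofReal (c k) * (‖f y‖₊ : ℝ≥0∞)) := by
        funext y
        by_cases hy : y ∈ closedBall x (2 ^ k * u)
        · simp [hF_def, Set.indicator_of_mem hy, mul_comm]
        · simp [hF_def, Set.indicator_of_notMem hy]
      rw [e2, lintegral_indicator measurableSet_closedBall,
        lintegral_const_mul' _ _ ENNReal.ofReal_ne_top]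
    · exact hf.aestronglyMeasurable.enorm.mul
        ((measurable_const.indicator measurableSet_closedBall).aemeasurable)
  -- Step D : each piece is controlled
  have stepD : ∀ k : ℕ,
      ENNReal.ofReal (c k) * ∫⁻ y in closedBall x (2 ^ k * u), (‖f y‖₊ : ℝ≥0∞)
        ≤ ENNReal.ofReal lam * w⁻¹ * vB * ENNReal.ofReal (Dconst n)
            * ENNReal.ofReal (1/2) ^ k := by
    intro k
    have hr : (0:ℝ) < 2 ^ k * u := by positivity
    have h1 := hcon (2 ^ k * u) hr
    have h2 : volume (closedBall x (2 ^ k * u))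
        = ENNReal.ofReal ((2 ^ k * u) ^ n) * vB := vol_closedBall n x hr.le
    have hck : c k * (2 ^ k * u) ^ n = Dconst n * (1/2) ^ k := by
      rw [hc_def]
      have h3 : ((2:ℝ) ^ k * u) ^ n ≠ 0 := by positivity
      field_simp
      rw [← mul_pow]; norm_num
    calc ENNReal.ofReal (c k) * ∫⁻ y in closedBall x (2 ^ k * u), (‖f y‖₊ : ℝ≥0∞)
        ≤ ENNReal.ofReal (c k)
            * (ENNReal.ofReal lam * w⁻¹ * (ENNReal.ofReal ((2 ^ k * u) ^ n) * vB)) := by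
          gcongr
          rw [← h2]
          exact h1
      _ = ENNReal.ofReal lam * w⁻¹ * vB
            * (ENNReal.ofReal (c k) * ENNReal.ofReal ((2 ^ k * u) ^ n)) := by ring
      _ = ENNReal.ofReal lam * w⁻¹ * vB * ENNReal.ofReal (Dconst n)
            * ENNReal.ofReal (1/2) ^ k := by
          rw [← ENNReal.ofReal_mul (by positivity), hck,
            ENNReal.ofReal_mul (by linarith), ENNReal.ofReal_pow (by norm_num)]
          ring
  -- summing up
  have htsum : ∑' k : ℕ, ENNReal.ofReal lam * w⁻¹ * vB * ENNReal.ofReal (Dconst n)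
      * ENNReal.ofReal (1/2) ^ k = ENNReal.ofReal lam := by
    rw [ENNReal.tsum_mul_left]
    have hhalf : ENNReal.ofReal (1/2 : ℝ) = (2:ℝ≥0∞)⁻¹ := by
      rw [one_div, ENNReal.ofReal_inv_of_pos (by norm_num : (0:ℝ)<2), ENNReal.ofReal_ofNat]
    rw [hhalf, ENNReal.tsum_geometric, ENNReal.one_sub_inv_two, inv_inv]
    have : vB * ENNReal.ofReal (Dconst n) * 2 = w := by
      rw [hw_def, ENNReal.ofReal_mul (by norm_num), ENNReal.ofReal_ofNat]
      ring
    calc ENNReal.ofReal lam * w⁻¹ * vB * ENNReal.ofReal (Dconst n) * 2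
        = ENNReal.ofReal lam * (w⁻¹ * (vB * ENNReal.ofReal (Dconst n) * 2)) := by ring
      _ = ENNReal.ofReal lam := by
          rw [this, ENNReal.inv_mul_cancel hw0 hwt, mul_one]
  -- combine
  have final : ENNReal.ofReal (u * ‖∫ y, f y • gradHeatKernel n t (x - y)‖)
      ≤ ENNReal.ofReal lam := by
    calc ENNReal.ofReal (u * ‖∫ y, f y • gradHeatKernel n t (x - y)‖)
        ≤ ∫⁻ y, (‖f y‖₊ : ℝ≥0∞) * ENNReal.ofReal (u * ‖gradHeatKernel n t (x - y)‖) := stepA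
      _ ≤ ∫⁻ y, (‖f y‖₊ : ℝ≥0∞) * ∑' k, F k y := by
          refine lintegral_mono fun y => ?_
          exact mul_le_mul_right (stepB y) _
      _ = ∑' k, ENNReal.ofReal (c k) * ∫⁻ y in closedBall x (2 ^ k * u), (‖f y‖₊ : ℝ≥0∞) := stepC
      _ ≤ ∑' k : ℕ, ENNReal.ofReal lam * w⁻¹ * vB * ENNReal.ofReal (Dconst n)
            * ENNReal.ofReal (1/2) ^ k := ENNReal.tsum_le_tsum stepD
      _ = ENNReal.ofReal lam := htsum
  exact absurd (hx.trans_le final) (lt_irrefl _)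

/-- The vertical heat maximal operator `M^{exp,∇}` is of weak type `(1,1)` on `ℝ^n`:
`vol{x : M^{exp,∇}f(x) > λ} ≤ C ‖f‖_{L¹} / λ`. -/
theorem stmt3 (n : ℕ) (hn : 1 ≤ n) :
    ∃ C : ℝ, 0 < C ∧
      ∀ (f : EuclideanSpace ℝ (Fin n) → ℝ), Integrable f volume →
        ∀ lam : ℝ, 0 < lam →
          volume {x | ENNReal.ofReal lam < vertHeatMax n f x}
            ≤ ENNReal.ofReal (C * (∫ y, |f y|) / lam) := by
  haveI : NeZero n := ⟨by omega⟩
  set vB := volume (ball (0 : EuclideanSpace ℝ (Fin n)) 1) with hvB_def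
  have hvB0 : vB ≠ 0 := (measure_ball_pos _ _ one_pos).ne'
  have hvBt : vB ≠ ⊤ := measure_ball_lt_top.ne
  have hD1 : (1:ℝ) ≤ Dconst n := one_le_Dconst n
  refine ⟨4 ^ n * (2 * Dconst n) * vB.toReal, by
    have := ENNReal.toReal_pos hvB0 hvBt
    positivity, ?_⟩
  intro f hf lam hlam
  set w := vB * ENNReal.ofReal (2 * Dconst n) with hw_def
  have hw0 : w ≠ 0 := by
    simp only [hw_def, mul_ne_zero_iff]
    exact ⟨hvB0, (ENNReal.ofReal_pos.2 (by linarith)).ne'⟩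
  have hwt : w ≠ ⊤ := ENNReal.mul_ne_top hvBt ENNReal.ofReal_ne_top
  set lamE := ENNReal.ofReal lam * w⁻¹ with hlamE_def
  have hlamE0 : lamE ≠ 0 :=
    mul_ne_zero (ENNReal.ofReal_pos.2 hlam).ne' (ENNReal.inv_ne_zero.2 hwt)
  have hlamEt : lamE ≠ ⊤ := ENNReal.mul_ne_top ENNReal.ofReal_ne_top (ENNReal.inv_ne_top.2 hw0)
  set μν := volume.withDensity (fun y => (‖f y‖₊ : ℝ≥0∞)) with hμν_def
  have hμν_apply : ∀ s : Set (EuclideanSpace ℝ (Fin n)), MeasurableSet s →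
      μν s = ∫⁻ y in s, (‖f y‖₊ : ℝ≥0∞) ∂volume := fun s hs => withDensity_apply _ hs
  set E := {x | ENNReal.ofReal lam < vertHeatMax n f x} with hE_def
  have hU : ∀ x ∈ E, ∃ r : ℝ, 0 < r ∧
      lamE * volume (closedBall x r) < μν (closedBall x r) := by
    intro x hx
    rw [hE_def, Set.mem_setOf_eq, vertHeatMax] at hx
    simp only [lt_iSup_iff] at hx
    obtain ⟨t, ht, hxt⟩ := hx
    obtain ⟨r, hr0, hr⟩ := point_estimate n hn hf ht x hxt
    exact ⟨r, hr0, by rwa [hμν_apply _ measurableSet_closedBall]⟩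
  choose! r hr0 hrlt using hU
  -- total mass
  set Itot := ∫⁻ y, (‖f y‖₊ : ℝ≥0∞) ∂volume with hItot_def
  have hItot_t : Itot ≠ ⊤ := hf.2.ne
  have hμν_univ : μν Set.univ = Itot := by
    rw [hμν_apply _ MeasurableSet.univ, Measure.restrict_univ]
  -- uniform bound on the radii
  set K := Itot * lamE⁻¹ * vB⁻¹ with hK_def
  have hKt : K ≠ ⊤ := by
    apply ENNReal.mul_ne_top
    apply ENNReal.mul_ne_top hItot_t (ENNReal.inv_ne_top.2 hlamE0)
    exact ENNReal.inv_ne_top.2 hvB0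
  set R := max 1 K.toReal with hR_def
  have hrR : ∀ x ∈ E, r x ≤ R := by
    intro x hx
    have h1 : lamE * (ENNReal.ofReal (r x ^ n) * vB) ≤ Itot := by
      rw [← vol_closedBall n x (hr0 x hx).le]
      calc lamE * volume (closedBall x (r x)) ≤ μν (closedBall x (r x)) := (hrlt x hx).le
        _ ≤ μν Set.univ := measure_mono (Set.subset_univ _)
        _ = Itot := hμν_univ
    have h2 : ENNReal.ofReal (r x ^ n) ≤ K := by
      have hcancel : lamE⁻¹ * vB⁻¹ * (lamE * (ENNReal.ofReal (r x ^ n) * vB))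
          = ENNReal.ofReal (r x ^ n) := by
        calc lamE⁻¹ * vB⁻¹ * (lamE * (ENNReal.ofReal (r x ^ n) * vB))
            = (lamE⁻¹ * lamE) * (vB⁻¹ * vB) * ENNReal.ofReal (r x ^ n) := by ring
          _ = ENNReal.ofReal (r x ^ n) := by
              rw [ENNReal.inv_mul_cancel hlamE0 hlamEt, ENNReal.inv_mul_cancel hvB0 hvBt,
                one_mul, one_mul]
      calc ENNReal.ofReal (r x ^ n)
          = lamE⁻¹ * vB⁻¹ * (lamE * (ENNReal.ofReal (r x ^ n) * vB)) := hcancel.symm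
        _ ≤ lamE⁻¹ * vB⁻¹ * Itot := by gcongr
        _ = K := by rw [hK_def]; ring
    have h3 : r x ^ n ≤ K.toReal := (ENNReal.ofReal_le_iff_le_toReal hKt).1 h2
    rcases le_or_gt (r x) 1 with h | h
    · exact h.trans (le_max_left _ _)
    · refine le_trans ?_ (le_max_right _ _)
      calc r x ≤ r x ^ n := le_self_pow₀ h.le (by omega)
        _ ≤ K.toReal := h3
  -- Vitali covering
  obtain ⟨ucov, hsub, hdisj, hcov⟩ :=
    Vitali.exists_disjoint_subfamily_covering_enlargement_closedBall E id r R hrR 4 (by norm_num)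
  have hcount : ucov.Countable := by
    apply hdisj.countable_of_nonempty_interior
    intro b hb
    exact ⟨b, ball_subset_interior_closedBall (mem_ball_self (hr0 b (hsub hb)))⟩
  have hEsub : E ⊆ ⋃ b ∈ ucov, closedBall b (4 * r b) := by
    intro x hx
    obtain ⟨b, hb, hsubb⟩ := hcov x hx
    exact Set.mem_biUnion hb (hsubb (mem_closedBall_self (hr0 x hx).le))
  -- put it all together
  have key : volume E ≤ ENNReal.ofReal (4 ^ n) * lamE⁻¹ * Itot := by
    calc volume E ≤ volume (⋃ b ∈ ucov, closedBall b (4 * r b)) := measure_mono hEsub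
      _ ≤ ∑' b : ucov, volume (closedBall (b : EuclideanSpace ℝ (Fin n)) (4 * r b)) :=
          measure_biUnion_le volume hcount _
      _ ≤ ∑' b : ucov, ENNReal.ofReal (4 ^ n) * lamE⁻¹ * μν (closedBall b (r b)) := by
          apply ENNReal.tsum_le_tsum
          intro b
          have hb := hsub b.2
          have h0 : (0:ℝ) ≤ r b := (hr0 b hb).le
          rw [vol_closedBall n _ (by positivity : (0:ℝ) ≤ 4 * r b)]
          rw [mul_pow, ENNReal.ofReal_mul (by positivity)]
          calc ENNReal.ofReal (4 ^ n) * ENNReal.ofReal (r (b:EuclideanSpace ℝ (Fin n)) ^ n) * vB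
              = ENNReal.ofReal (4 ^ n) * volume (closedBall (b : EuclideanSpace ℝ (Fin n)) (r b)) := by
                rw [vol_closedBall n _ h0]; ring
            _ ≤ ENNReal.ofReal (4 ^ n) * (lamE⁻¹ * μν (closedBall (b:EuclideanSpace ℝ (Fin n)) (r b))) := by
                gcongr
                have := (hrlt b hb).le
                calc volume (closedBall (b:EuclideanSpace ℝ (Fin n)) (r b))
                    = lamE⁻¹ * (lamE * volume (closedBall (b:EuclideanSpace ℝ (Fin n)) (r b))) := by
                      rw [← mul_assoc, ENNReal.inv_mul_cancel hlamE0 hlamEt, one_mul]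
                  _ ≤ lamE⁻¹ * μν (closedBall (b:EuclideanSpace ℝ (Fin n)) (r b)) := by gcongr
            _ = ENNReal.ofReal (4 ^ n) * lamE⁻¹ * μν (closedBall (b:EuclideanSpace ℝ (Fin n)) (r b)) := by ring
      _ = ENNReal.ofReal (4 ^ n) * lamE⁻¹ * ∑' b : ucov, μν (closedBall (b:EuclideanSpace ℝ (Fin n)) (r b)) := by
          rw [ENNReal.tsum_mul_left]
      _ ≤ ENNReal.ofReal (4 ^ n) * lamE⁻¹ * Itot := by
          gcongr
          calc ∑' b : ucov, μν (closedBall (b:EuclideanSpace ℝ (Fin n)) (r b))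
              = μν (⋃ b ∈ ucov, closedBall b (r b)) := by
                simp only [id] at hdisj
                exact (measure_biUnion hcount hdisj fun b _ => measurableSet_closedBall).symm
            _ ≤ μν Set.univ := measure_mono (Set.subset_univ _)
            _ = Itot := hμν_univ
  -- identify the bound
  have hIeq : Itot = ENNReal.ofReal (∫ y, |f y|) := by
    rw [hItot_def]; simp_rw [← enorm_eq_nnnorm]; rw [← ofReal_integral_norm_eq_lintegral_enorm hf]
    simp [Real.norm_eq_abs]
  have hfinal : ENNReal.ofReal (4 ^ n) * lamE⁻¹ * Itot
      = ENNReal.ofReal (4 ^ n * (2 * Dconst n) * vB.toReal * (∫ y, |f y|) / lam) := by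
    have hIpos : 0 ≤ ∫ y, |f y| := integral_nonneg fun y => abs_nonneg _
    rw [ENNReal.ofReal_div_of_pos hlam, div_eq_mul_inv]
    have e1 : lamE⁻¹ = (ENNReal.ofReal lam)⁻¹ * w := by
      rw [hlamE_def, ENNReal.mul_inv (Or.inl (ENNReal.ofReal_pos.2 hlam).ne')
        (Or.inl ENNReal.ofReal_ne_top), inv_inv]
    have e2 : ENNReal.ofReal (4 ^ n * (2 * Dconst n) * vB.toReal * (∫ y, |f y|))
        = ENNReal.ofReal (4 ^ n) * ENNReal.ofReal (2 * Dconst n) * vB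
            * ENNReal.ofReal (∫ y, |f y|) := by
      rw [ENNReal.ofReal_mul (by positivity), ENNReal.ofReal_mul (by positivity),
        ENNReal.ofReal_mul (by positivity), ENNReal.ofReal_toReal hvBt]
    rw [e1, hIeq, e2, hw_def]
    ring
  rw [← hE_def] at *
  calc volume E ≤ ENNReal.ofReal (4 ^ n) * lamE⁻¹ * Itot := key
    _ = _ := hfinal
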